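/- Let W be a positive random variable with c·ε^τ ≤ P(W < ε) ≤ C·ε^τ for all 0 < ε < 1, where 0 < c ≤ C and τ > 0. Let a > 1, n ∈ ℕ, and let Z_n be a random variable independent of an i.i.d. sequence (W_i) of copies of W, with Z_n ≥ 1, such that conditionally on Z_n = m, W has the law of a^{−n}(W₁+⋯+W_m). Then P(Z_n > 1 | W < ε) ≤ (C²/c)·a^{2nτ}·ε^τ for all sufficiently small ε > 0; in particular P(Z_n > 1 | W < ε) → 0 as ε ↓ 0. -/

import Mathlib

open MeasureTheory ProbabilityTheory

/-- The case `μ = 1` of the conditioning principle: under the two-sided tail bound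
`c ε^τ ≤ P(W < ε) ≤ C ε^τ` and the self-similarity of `W` given `Z_n = m`,
`P(Z_n > 1 | W < ε) ≤ (C²/c) a^{2nτ} ε^τ` for all small `ε`, and in particular
`P(Z_n > 1 | W < ε) → 0` as `ε ↓ 0`. -/
theorem stmt16 {Ω : Type*} [MeasureSpace Ω] [IsProbabilityMeasure (ℙ : Measure Ω)]
    (W : Ω → ℝ) (hW : Measurable W)
    (Ws : ℕ → Ω → ℝ) (hWs : ∀ i, Measurable (Ws i))
    (hiid : ∀ i, Measure.map (Ws i) ℙ = Measure.map W ℙ)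
    (hindep : iIndepFun Ws ℙ)
    (Zn : Ω → ℕ) (hZn : Measurable Zn) (hZ1 : ∀ ω, 1 ≤ Zn ω)
    (c C τ a : ℝ) (hc : 0 < c) (hcC : c ≤ C) (hτ : 0 < τ) (ha : 1 < a)
    (hWpos : ∀ ε > 0, 0 < ℙ {ω | W ω < ε})
    (htail : ∀ ε : ℝ, 0 < ε → ε < 1 →
      c * ε ^ τ ≤ (ℙ {ω | W ω < ε}).toReal ∧ (ℙ {ω | W ω < ε}).toReal ≤ C * ε ^ τ)
    (n : ℕ)
    (hcond : ∀ m : ℕ, 1 ≤ m → ℙ {ω | Zn ω = m} ≠ 0 →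
      Measure.map W (ℙ[|{ω | Zn ω = m}]) =
        Measure.map (fun ω => (a ^ n)⁻¹ * ∑ i ∈ Finset.range m, Ws i ω) ℙ) :
    (∃ ε₀ > 0, ∀ ε ∈ Set.Ioo (0:ℝ) ε₀,
      ((ℙ[|{ω | W ω < ε}]) {ω | 1 < Zn ω}).toReal ≤
        (C ^ 2 / c) * a ^ (2 * (n : ℝ) * τ) * ε ^ τ) ∧
    Filter.Tendsto (fun ε : ℝ => ((ℙ[|{ω | W ω < ε}]) {ω | 1 < Zn ω}).toReal)
      (nhdsWithin 0 (Set.Ioi 0)) (nhds 0) := by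
  classical
  have ha0 : (0:ℝ) < a := lt_trans one_pos ha
  have han : (0:ℝ) < a ^ n := pow_pos ha0 n
  have hC : 0 < C := lt_of_lt_of_le hc hcC
  -- ε ^ τ → 0 as ε → 0⁺
  have hrt : Filter.Tendsto (fun ε : ℝ => ε ^ τ) (nhdsWithin 0 (Set.Ioi 0)) (nhds 0) := by
    have h := (Real.continuousAt_rpow_const 0 τ (Or.inr hτ.le)).tendsto
    rw [Real.zero_rpow hτ.ne'] at h
    exact h.mono_left nhdsWithin_le_nhds
  -- W > 0 a.s.
  have h0 : ℙ {ω | W ω ≤ 0} = 0 := by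
    have hle : ∀ ε ∈ Set.Ioo (0:ℝ) 1, (ℙ {ω | W ω ≤ 0}).toReal ≤ C * ε ^ τ := by
      intro ε hε
      have hmono : ℙ {ω | W ω ≤ 0} ≤ ℙ {ω | W ω < ε} :=
        measure_mono (fun ω hω => lt_of_le_of_lt hω hε.1)
      have := (htail ε hε.1 hε.2).2
      have h1 : (ℙ {ω | W ω ≤ 0}).toReal ≤ (ℙ {ω | W ω < ε}).toReal :=
        ENNReal.toReal_mono (measure_ne_top _ _) hmono
      linarith
    have hlim : Filter.Tendsto (fun ε : ℝ => C * ε ^ τ) (nhdsWithin 0 (Set.Ioi 0)) (nhds 0) := by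
      simpa using hrt.const_mul C
    have hp : (ℙ {ω | W ω ≤ 0}).toReal ≤ 0 := by
      refine ge_of_tendsto hlim ?_
      filter_upwards [Ioo_mem_nhdsGT (show (0:ℝ) < 1 by norm_num)] with ε hε
      exact hle ε hε
    have : (ℙ {ω | W ω ≤ 0}).toReal = 0 := le_antisymm hp ENNReal.toReal_nonneg
    exact (ENNReal.toReal_eq_zero_iff _).mp this |>.resolve_right (measure_ne_top _ _)
  have hWs0 : ∀ i, ℙ {ω | Ws i ω ≤ 0} = 0 := by
    intro i
    have h1 : ℙ {ω | Ws i ω ≤ 0} = Measure.map (Ws i) ℙ (Set.Iic 0) := by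
      rw [Measure.map_apply (hWs i) measurableSet_Iic]; rfl
    have h2 : ℙ {ω | W ω ≤ 0} = Measure.map W ℙ (Set.Iic 0) := by
      rw [Measure.map_apply hW measurableSet_Iic]; rfl
    rw [h1, hiid i, ← h2, h0]
  have hae : ∀ᵐ ω ∂(ℙ : Measure Ω), ∀ i, 0 < Ws i ω := by
    rw [ae_all_iff]
    intro i
    rw [ae_iff]
    simpa [not_lt] using hWs0 i
  -- identical distribution of the Ws i
  have hmap : ∀ i (t : ℝ), ℙ {ω | Ws i ω < t} = ℙ {ω | W ω < t} := by
    intro i t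
    have h1 : ℙ {ω | Ws i ω < t} = Measure.map (Ws i) ℙ (Set.Iio t) := by
      rw [Measure.map_apply (hWs i) measurableSet_Iio]; rfl
    have h2 : ℙ {ω | W ω < t} = Measure.map W ℙ (Set.Iio t) := by
      rw [Measure.map_apply hW measurableSet_Iio]; rfl
    rw [h1, hiid i, ← h2]
  -- key sum bound
  have hsum : ∀ m : ℕ, 2 ≤ m → ∀ ε : ℝ, 0 < ε →
      ℙ {ω | (a ^ n)⁻¹ * ∑ i ∈ Finset.range m, Ws i ω < ε} ≤
        ℙ {ω | W ω < a ^ n * ε} * ℙ {ω | W ω < a ^ n * ε} := by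
    intro m hm ε hε
    set t := a ^ n * ε with ht
    have hstep : ℙ {ω | (a ^ n)⁻¹ * ∑ i ∈ Finset.range m, Ws i ω < ε} ≤
        ℙ (Ws 0 ⁻¹' Set.Iio t ∩ Ws 1 ⁻¹' Set.Iio t) := by
      apply measure_mono_ae
      filter_upwards [hae] with ω hpos hmem
      have hS : ∑ i ∈ Finset.range m, Ws i ω < t := by
        rw [← inv_mul_lt_iff₀ han]
        exact hmem
      have hsub : ({0, 1} : Finset ℕ) ⊆ Finset.range m := by
        intro x hx
        simp only [Finset.mem_insert, Finset.mem_singleton] at hx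
        rcases hx with rfl | rfl <;> simp [Finset.mem_range] <;> omega
      have hpair : ∑ i ∈ ({0, 1} : Finset ℕ), Ws i ω = Ws 0 ω + Ws 1 ω :=
        Finset.sum_pair (by norm_num)
      have hle : Ws 0 ω + Ws 1 ω ≤ ∑ i ∈ Finset.range m, Ws i ω := by
        rw [← hpair]
        exact Finset.sum_le_sum_of_subset_of_nonneg hsub (fun i _ _ => (hpos i).le)
      constructor
      · show Ws 0 ω < t
        have := hpos 1; linarith
      · show Ws 1 ω < t
        have := hpos 0; linarith
    have hind : IndepFun (Ws 0) (Ws 1) ℙ := hindep.indepFun (show (0:ℕ) ≠ 1 by norm_num)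
    have hmul := hind.measure_inter_preimage_eq_mul (Set.Iio t) (Set.Iio t)
      measurableSet_Iio measurableSet_Iio
    calc ℙ {ω | (a ^ n)⁻¹ * ∑ i ∈ Finset.range m, Ws i ω < ε}
        ≤ ℙ (Ws 0 ⁻¹' Set.Iio t ∩ Ws 1 ⁻¹' Set.Iio t) := hstep
      _ = ℙ (Ws 0 ⁻¹' Set.Iio t) * ℙ (Ws 1 ⁻¹' Set.Iio t) := hmul
      _ = ℙ {ω | W ω < t} * ℙ {ω | W ω < t} := by
          rw [show Ws 0 ⁻¹' Set.Iio t = {ω | Ws 0 ω < t} from rfl,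
            show Ws 1 ⁻¹' Set.Iio t = {ω | Ws 1 ω < t} from rfl, hmap 0 t, hmap 1 t]
  -- main intersection bound
  have hinter : ∀ ε : ℝ, 0 < ε →
      ℙ ({ω | W ω < ε} ∩ {ω | 1 < Zn ω}) ≤
        ℙ {ω | W ω < a ^ n * ε} * ℙ {ω | W ω < a ^ n * ε} := by
    intro ε hε
    set K := ℙ {ω | W ω < a ^ n * ε} * ℙ {ω | W ω < a ^ n * ε} with hK
    have hU : {ω | 1 < Zn ω} = ⋃ m : ℕ, {ω | Zn ω = m + 2} := by
      ext ω
      simp only [Set.mem_setOf_eq, Set.mem_iUnion]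
      constructor
      · intro h; exact ⟨Zn ω - 2, by omega⟩
      · rintro ⟨m, hm⟩; omega
    have hterm : ∀ m : ℕ, ℙ ({ω | W ω < ε} ∩ {ω | Zn ω = m + 2}) ≤
        ℙ {ω | Zn ω = m + 2} * K := by
      intro m
      by_cases hm : ℙ {ω | Zn ω = m + 2} = 0
      · calc ℙ ({ω | W ω < ε} ∩ {ω | Zn ω = m + 2}) ≤ ℙ {ω | Zn ω = m + 2} :=
            measure_mono Set.inter_subset_right
          _ = 0 := hm
          _ ≤ _ := zero_le
      · have hms : MeasurableSet {ω | Zn ω = m + 2} := hZn (measurableSet_singleton _)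
        have hcnd : ℙ ({ω | Zn ω = m + 2} ∩ {ω | W ω < ε}) =
            ℙ {ω | Zn ω = m + 2} * (ℙ[|{ω | Zn ω = m + 2}]) {ω | W ω < ε} := by
          rw [cond_apply hms, ← mul_assoc, ENNReal.mul_inv_cancel hm (measure_ne_top _ _),
            one_mul]
        have hmeas : Measurable (fun ω => (a ^ n)⁻¹ * ∑ i ∈ Finset.range (m + 2), Ws i ω) :=
          (Finset.measurable_sum _ (fun i _ => hWs i)).const_mul _
        have hcval : (ℙ[|{ω | Zn ω = m + 2}]) {ω | W ω < ε} =
            ℙ {ω | (a ^ n)⁻¹ * ∑ i ∈ Finset.range (m + 2), Ws i ω < ε} := by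
          have h1 : (ℙ[|{ω | Zn ω = m + 2}]) {ω | W ω < ε} =
              Measure.map W (ℙ[|{ω | Zn ω = m + 2}]) (Set.Iio ε) := by
            rw [Measure.map_apply hW measurableSet_Iio]; rfl
          rw [h1, hcond (m + 2) (by omega) hm, Measure.map_apply hmeas measurableSet_Iio]
          rfl
        calc ℙ ({ω | W ω < ε} ∩ {ω | Zn ω = m + 2})
            = ℙ ({ω | Zn ω = m + 2} ∩ {ω | W ω < ε}) := by rw [Set.inter_comm]
          _ = ℙ {ω | Zn ω = m + 2} * (ℙ[|{ω | Zn ω = m + 2}]) {ω | W ω < ε} := hcnd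
          _ ≤ ℙ {ω | Zn ω = m + 2} * K := by
              apply mul_le_mul_right
              rw [hcval]
              exact hsum (m + 2) (by omega) ε hε
    have hdisj : Pairwise (Function.onFun Disjoint (fun m => {ω | Zn ω = m + 2})) := by
      intro i j hij
      refine Set.disjoint_left.mpr fun ω h1 h2 => hij ?_
      simp only [Set.mem_setOf_eq] at h1 h2
      omega
    have hms : ∀ m : ℕ, MeasurableSet {ω | Zn ω = m + 2} :=
      fun m => hZn (measurableSet_singleton _)
    calc ℙ ({ω | W ω < ε} ∩ {ω | 1 < Zn ω})
        = ℙ (⋃ m : ℕ, ({ω | W ω < ε} ∩ {ω | Zn ω = m + 2})) := by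
          rw [hU, Set.inter_iUnion]
      _ ≤ ∑' m : ℕ, ℙ ({ω | W ω < ε} ∩ {ω | Zn ω = m + 2}) := measure_iUnion_le _
      _ ≤ ∑' m : ℕ, ℙ {ω | Zn ω = m + 2} * K := ENNReal.tsum_le_tsum hterm
      _ = (∑' m : ℕ, ℙ {ω | Zn ω = m + 2}) * K := ENNReal.tsum_mul_right
      _ = ℙ (⋃ m : ℕ, {ω | Zn ω = m + 2}) * K := by rw [measure_iUnion hdisj hms]
      _ ≤ 1 * K := mul_le_mul_left prob_le_one _
      _ = K := one_mul K
  -- the quantitative bound for small ε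
  have hbound : ∀ ε ∈ Set.Ioo (0:ℝ) (a ^ n)⁻¹,
      ((ℙ[|{ω | W ω < ε}]) {ω | 1 < Zn ω}).toReal ≤
        (C ^ 2 / c) * a ^ (2 * (n : ℝ) * τ) * ε ^ τ := by
    intro ε hε
    obtain ⟨hε0, hε1⟩ := hε
    set t := a ^ n * ε with htdef
    have ht0 : 0 < t := mul_pos han hε0
    have ht1 : t < 1 := by
      rw [htdef]
      calc a ^ n * ε < a ^ n * (a ^ n)⁻¹ := by
            exact (mul_lt_mul_iff_right₀ han).mpr hε1
        _ = 1 := mul_inv_cancel₀ han.ne'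
    have hεlt1 : ε < 1 := lt_of_lt_of_le hε1 (by
      rw [inv_le_one_iff₀]
      right; exact one_le_pow₀ ha.le)
    have hdenom := (htail ε hε0 hεlt1).1
    have hnum := (htail t ht0 ht1).2
    have hεne : ℙ {ω | W ω < ε} ≠ 0 := (hWpos ε hε0).ne'
    have hcnd : (ℙ[|{ω | W ω < ε}]) {ω | 1 < Zn ω} =
        (ℙ {ω | W ω < ε})⁻¹ * ℙ ({ω | W ω < ε} ∩ {ω | 1 < Zn ω}) :=
      cond_apply (hW measurableSet_Iio) ℙ _
    have hεpos' : 0 < c * ε ^ τ := mul_pos hc (Real.rpow_pos_of_pos hε0 τ)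
    have hWεpos : 0 < (ℙ {ω | W ω < ε}).toReal := lt_of_lt_of_le hεpos' hdenom
    have hWtnn : 0 ≤ (ℙ {ω | W ω < t}).toReal := ENNReal.toReal_nonneg
    -- toReal of the conditional probability
    have hval : ((ℙ[|{ω | W ω < ε}]) {ω | 1 < Zn ω}).toReal =
        (ℙ ({ω | W ω < ε} ∩ {ω | 1 < Zn ω})).toReal / (ℙ {ω | W ω < ε}).toReal := by
      rw [hcnd, ENNReal.toReal_mul, ENNReal.toReal_inv]
      ring
    have hnumR : (ℙ ({ω | W ω < ε} ∩ {ω | 1 < Zn ω})).toReal ≤ (C * t ^ τ) ^ 2 := by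
      have h1 := hinter ε hε0
      have h2 : (ℙ ({ω | W ω < ε} ∩ {ω | 1 < Zn ω})).toReal ≤
          (ℙ {ω | W ω < t} * ℙ {ω | W ω < t}).toReal :=
        ENNReal.toReal_mono (by finiteness) h1
      rw [ENNReal.toReal_mul] at h2
      calc (ℙ ({ω | W ω < ε} ∩ {ω | 1 < Zn ω})).toReal
          ≤ (ℙ {ω | W ω < t}).toReal * (ℙ {ω | W ω < t}).toReal := h2
        _ ≤ (C * t ^ τ) * (C * t ^ τ) := by
            apply mul_le_mul hnum hnum hWtnn (le_trans hWtnn hnum)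
        _ = (C * t ^ τ) ^ 2 := (sq _).symm
    -- the algebraic identity
    have hid : (C * t ^ τ) ^ 2 / (c * ε ^ τ) =
        (C ^ 2 / c) * a ^ (2 * (n : ℝ) * τ) * ε ^ τ := by
      have h1 : t ^ τ = a ^ ((n : ℝ) * τ) * ε ^ τ := by
        rw [htdef, Real.mul_rpow han.le hε0.le, ← Real.rpow_natCast a n,
          ← Real.rpow_mul ha0.le]
      have h2 : a ^ (2 * (n : ℝ) * τ) = a ^ ((n : ℝ) * τ) * a ^ ((n : ℝ) * τ) := by
        rw [← Real.rpow_add ha0]; ring_nf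
      have h3 : (0:ℝ) < ε ^ τ := Real.rpow_pos_of_pos hε0 τ
      have h4 : (0:ℝ) < a ^ ((n : ℝ) * τ) := Real.rpow_pos_of_pos ha0 _
      rw [h1, h2]
      field_simp
    rw [hval, ← hid]
    exact div_le_div₀ (by positivity) hnumR hεpos' hdenom
  refine ⟨⟨(a ^ n)⁻¹, inv_pos.mpr han, hbound⟩, ?_⟩
  -- the limit statement
  have hKlim : Filter.Tendsto (fun ε : ℝ => (C ^ 2 / c) * a ^ (2 * (n : ℝ) * τ) * ε ^ τ)
      (nhdsWithin 0 (Set.Ioi 0)) (nhds 0) := by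
    simpa using hrt.const_mul ((C ^ 2 / c) * a ^ (2 * (n : ℝ) * τ))
  apply tendsto_of_tendsto_of_tendsto_of_le_of_le' tendsto_const_nhds hKlim
  · exact Filter.Eventually.of_forall (fun ε => ENNReal.toReal_nonneg)
  · filter_upwards [Ioo_mem_nhdsGT (inv_pos.mpr han)] with ε hε
    exact hbound ε hε
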